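/- Let p, q ≥ 1, let π : Fin p → Fin q → ℝ be a joint probability matrix (π_{u,v} ≥ 0, Σ_{u,v} π_{u,v} = 1), let ρ > 0, and for each v in Fin q let σ_v : Fin p ≃ Fin p be a bijection (the strategy used upon observing side information v). With G(σ_v,u) = (σ_v⁻¹(u)).val + 1 the rank at which u is guessed, one has Σ_v Σ_u π_{u,v} · (G(σ_v,u))^ρ ≥ (1 + log p)^{−ρ} · Σ_v (Σ_u (π_{u,v})^{1/(1+ρ)})^{1+ρ}. -/

import Mathlib

/-- Generalized guessing lower bound with side information: for a
joint probability matrix `π` and a family of strategies `σ_v`,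
`Σ_v Σ_u π_{u,v}·G(σ_v,u)^ρ ≥ (1 + log p)^{−ρ}·Σ_v (Σ_u π_{u,v}^{1/(1+ρ)})^{1+ρ}`. -/
theorem generalized_guessing_lower_bound
    (p q : ℕ) (hp : 0 < p) (hq : 0 < q)
    (π : Fin p → Fin q → ℝ)
    (hπnonneg : ∀ u v, 0 ≤ π u v)
    (hπsum : ∑ u, ∑ v, π u v = 1)
    (ρ : ℝ) (hρ : 0 < ρ)
    (σ : Fin q → (Fin p ≃ Fin p)) :
    ∑ v, ∑ u, π u v * ((((σ v).symm u : ℕ) : ℝ) + 1) ^ ρ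
      ≥ (1 + Real.log p) ^ (-ρ) * ∑ v, (∑ u, (π u v) ^ (1 / (1 + ρ))) ^ (1 + ρ) := by
  set L : ℝ := 1 + Real.log p with hL
  have hL1 : (1:ℝ) ≤ L := by
    have : (0:ℝ) ≤ Real.log p := Real.log_nonneg (by exact_mod_cast hp)
    linarith
  have hLpos : (0:ℝ) < L := lt_of_lt_of_le one_pos hL1
  have h1ρ : (0:ℝ) < 1 + ρ := by linarith
  -- harmonic sum bound
  have hH : ∀ v : Fin q, ∑ u : Fin p, (((((σ v).symm u : ℕ) : ℝ) + 1))⁻¹ ≤ L := by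
    intro v
    have hperm : ∑ u : Fin p, (((((σ v).symm u : ℕ) : ℝ) + 1))⁻¹
        = ∑ i : Fin p, (((i : ℕ) : ℝ) + 1)⁻¹ :=
      Equiv.sum_comp ((σ v).symm) (fun i => (((i : ℕ) : ℝ) + 1)⁻¹)
    have hharm : ∑ i : Fin p, (((i : ℕ) : ℝ) + 1)⁻¹ = (harmonic p : ℝ) := by
      rw [Fin.sum_univ_eq_sum_range (fun i => (((i : ℕ) : ℝ) + 1)⁻¹)]
      unfold harmonic
      push_cast
      rfl
    rw [hperm, hharm]
    exact harmonic_le_one_add_log p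
  rw [ge_iff_le, Finset.mul_sum]
  refine Finset.sum_le_sum fun v _ => ?_
  set G : Fin p → ℝ := fun u => (((σ v).symm u : ℕ) : ℝ) + 1 with hG
  have hGpos : ∀ u, 0 < G u := fun u => by positivity
  set S : ℝ := ∑ u, π u v * G u ^ ρ with hS
  have hSnonneg : 0 ≤ S := Finset.sum_nonneg fun u _ => by
    have := hπnonneg u v; positivity
  set H : ℝ := ∑ u, (G u)⁻¹ with hHdef
  have hHnonneg : 0 ≤ H := Finset.sum_nonneg fun u _ => by positivity
  have hHL : H ≤ L := hH v
  -- Hölder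
  have hconj : Real.HolderConjugate (1 + ρ) ((1 + ρ) / ρ) := by
    rw [Real.holderConjugate_iff]
    constructor
    · linarith
    · field_simp
  have holder : ∑ u, (π u v) ^ (1 / (1 + ρ))
      ≤ S ^ (1 / (1 + ρ)) * H ^ (ρ / (1 + ρ)) := by
    have key := Real.inner_le_Lp_mul_Lq (Finset.univ)
      (fun u => (π u v * G u ^ ρ) ^ (1 / (1 + ρ)))
      (fun u => ((G u)⁻¹) ^ (ρ / (1 + ρ))) hconj
    have e1 : ∀ u : Fin p, (π u v * G u ^ ρ) ^ (1 / (1 + ρ)) * ((G u)⁻¹) ^ (ρ / (1 + ρ))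
        = (π u v) ^ (1 / (1 + ρ)) := by
      intro u
      have hg := (hGpos u).le
      rw [Real.mul_rpow (hπnonneg u v) (Real.rpow_nonneg hg ρ), mul_assoc,
        ← Real.rpow_mul hg, Real.inv_rpow hg, ← Real.rpow_neg hg,
        ← Real.rpow_add (hGpos u)]
      have h0 : ρ * (1 / (1 + ρ)) + -(ρ / (1 + ρ)) = 0 := by ring
      rw [h0, Real.rpow_zero, mul_one]
    have e2 : ∀ u : Fin p, |(π u v * G u ^ ρ) ^ (1 / (1 + ρ))| ^ (1 + ρ) = π u v * G u ^ ρ := by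
      intro u
      have hnn : 0 ≤ π u v * G u ^ ρ := by
        have := hπnonneg u v; positivity
      rw [abs_of_nonneg (Real.rpow_nonneg hnn _), ← Real.rpow_mul hnn,
        one_div, inv_mul_cancel₀ (by linarith : (1:ℝ) + ρ ≠ 0), Real.rpow_one]
    have e3 : ∀ u : Fin p, |((G u)⁻¹) ^ (ρ / (1 + ρ))| ^ ((1 + ρ) / ρ) = (G u)⁻¹ := by
      intro u
      have hnn : (0:ℝ) ≤ (G u)⁻¹ := by positivity
      rw [abs_of_nonneg (Real.rpow_nonneg hnn _), ← Real.rpow_mul hnn]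
      rw [div_mul_div_comm, mul_comm ρ, div_self (by positivity : (1+ρ)*ρ ≠ 0), Real.rpow_one]
    simp only [e1, e2, e3] at key
    calc ∑ u, (π u v) ^ (1 / (1 + ρ))
        ≤ (∑ u, π u v * G u ^ ρ) ^ (1 / (1 + ρ))
          * (∑ u, (G u)⁻¹) ^ (1 / ((1 + ρ) / ρ)) := key
      _ = S ^ (1 / (1 + ρ)) * H ^ (ρ / (1 + ρ)) := by
          rw [one_div_div]
  -- raise to power 1+ρ
  have hAnn : 0 ≤ ∑ u, (π u v) ^ (1 / (1 + ρ)) :=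
    Finset.sum_nonneg fun u _ => Real.rpow_nonneg (hπnonneg u v) _
  have hpow : (∑ u, (π u v) ^ (1 / (1 + ρ))) ^ (1 + ρ) ≤ S * H ^ ρ := by
    have := Real.rpow_le_rpow hAnn holder (le_of_lt h1ρ)
    calc (∑ u, (π u v) ^ (1 / (1 + ρ))) ^ (1 + ρ)
        ≤ (S ^ (1 / (1 + ρ)) * H ^ (ρ / (1 + ρ))) ^ (1 + ρ) := this
      _ = S * H ^ ρ := by
          rw [Real.mul_rpow (Real.rpow_nonneg hSnonneg _) (Real.rpow_nonneg hHnonneg _),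
            ← Real.rpow_mul hSnonneg, ← Real.rpow_mul hHnonneg,
            one_div, inv_mul_cancel₀ (by linarith : (1:ℝ) + ρ ≠ 0), Real.rpow_one,
            div_mul_cancel₀ _ (by linarith : (1:ℝ) + ρ ≠ 0)]
  have hHρ : H ^ ρ ≤ L ^ ρ := Real.rpow_le_rpow hHnonneg hHL (le_of_lt hρ)
  have hLmul : L ^ (-ρ) * (S * H ^ ρ) ≤ S := by
    rw [Real.rpow_neg (le_of_lt hLpos)]
    have hLρpos : 0 < L ^ ρ := Real.rpow_pos_of_pos hLpos ρ
    rw [inv_mul_le_iff₀ hLρpos]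
    calc S * H ^ ρ ≤ S * L ^ ρ := mul_le_mul_of_nonneg_left hHρ hSnonneg
      _ = L ^ ρ * S := mul_comm _ _
  calc L ^ (-ρ) * (∑ u, (π u v) ^ (1 / (1 + ρ))) ^ (1 + ρ)
      ≤ L ^ (-ρ) * (S * H ^ ρ) :=
        mul_le_mul_of_nonneg_left hpow (Real.rpow_nonneg (le_of_lt hLpos) _)
    _ ≤ S := hLmul
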